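/- Let $f \in H^1(\mu,w)$ have absolutely continuous representative, let $(\psi_j')_{j\ge 1}$ be an orthogonal basis of $L^2(\mu,w)$, and assume $1/(w\rho) \in L^1(a,b)$. Then for all $x, x_0 \in (a,b)$: $f(x) = f(x_0) + \sum_{j \ge 1} \frac{\langle f', \psi_j' \rangle_w}{\|\psi_j'\|_w^2} (\psi_j(x) - \psi_j(x_0))$, with pointwise (in fact uniform) convergence of the series, where $\psi_j$ is an absolutely continuous primitive of $\psi_j'$. -/

import Mathlib

open MeasureTheory Set
open scoped RealInnerProductSpace ENNReal NNReal

/-- Membership in the weighted Sobolev space `H¹(μ,w)` on `(a,b)`. -/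
def MemH1 (a b : ℝ) (ρ w : ℝ → ℝ) (g g' : ℝ → ℝ) : Prop :=
  (∀ x ∈ Set.Ioo a b, HasDerivAt g (g' x) x) ∧
  MeasureTheory.IntegrableOn (fun x => g x ^ 2 * ρ x) (Set.Ioo a b) ∧
  MeasureTheory.IntegrableOn (fun x => w x * g' x ^ 2 * ρ x) (Set.Ioo a b)

/-- Pointwise expansion of `f ∈ H¹(μ,w)` in terms of primitives of an orthogonal basis
`(ψⱼ')_{j≥1}` of `L²(μ,w)`: for all `x, x₀ ∈ (a,b)`,
`f(x) = f(x₀) + ∑_{j≥1} (⟨f',ψⱼ'⟩_w / ‖ψⱼ'‖_w²)(ψⱼ(x) - ψⱼ(x₀))`, with convergence. -/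
theorem stmt7 (a b : ℝ) (hab : a < b) (ρ w : ℝ → ℝ)
    (hρpos : ∀ x ∈ Ioo a b, 0 < ρ x) (hwpos : ∀ x ∈ Ioo a b, 0 < w x)
    (hprob : ∫ x in Ioo a b, ρ x = 1)
    (hinv : IntegrableOn (fun x => 1 / (w x * ρ x)) (Ioo a b))
    (ψ ψd : ℕ → ℝ → ℝ)
    (hprim : ∀ j, ∀ x ∈ Ioo a b, HasDerivAt (ψ j) (ψd j x) x)
    (hmemd : ∀ j, IntegrableOn (fun x => w x * ψd j x ^ 2 * ρ x) (Ioo a b))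
    (hdorth : ∀ j m, 1 ≤ j → 1 ≤ m → j ≠ m →
      ∫ x in Ioo a b, w x * ψd j x * ψd m x * ρ x = 0)
    (hdpos : ∀ j, 1 ≤ j → 0 < ∫ x in Ioo a b, w x * ψd j x ^ 2 * ρ x)
    (hcompleteW : ∀ f : ℝ → ℝ, Measurable f →
      IntegrableOn (fun x => w x * f x ^ 2 * ρ x) (Ioo a b) →
      (∀ j, 1 ≤ j → ∫ x in Ioo a b, f x * ψd j x * w x * ρ x = 0) →
      ∀ᵐ x ∂(volume.restrict (Ioo a b)), f x = 0)
    (f f' : ℝ → ℝ) (hf : MemH1 a b ρ w f f') :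
    ∀ x ∈ Ioo a b, ∀ x₀ ∈ Ioo a b,
      HasSum (fun j : ℕ => if j = 0 then 0 else
          ((∫ t in Ioo a b, w t * f' t * ψd j t * ρ t) /
            (∫ t in Ioo a b, w t * ψd j t ^ 2 * ρ t)) * (ψ j x - ψ j x₀))
        (f x - f x₀) := by
  obtain ⟨hder, -, hfint⟩ := hf
  classical
  intro x hx x₀ hx₀
  set ν' : Measure ℝ := volume.restrict (Set.Ioo a b) with hν'def
  have hIoo : MeasurableSet (Set.Ioo a b) := measurableSet_Ioo
  have hmem : ∀ᵐ t ∂ν', t ∈ Set.Ioo a b := ae_restrict_mem hIoo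
  set k : ℝ → ℝ := fun t => w t * ρ t with hkdef
  have hkpos : ∀ᵐ t ∂ν', 0 < k t :=
    hmem.mono fun t ht => mul_pos (hwpos t ht) (hρpos t ht)
  have hinvm : AEMeasurable (fun t => 1 / k t) ν' := hinv.aemeasurable
  have hkm : AEMeasurable k ν' := by
    have h1 : AEMeasurable (fun t => 1 / (1 / k t)) ν' := aemeasurable_const.div hinvm
    exact h1.congr (hkpos.mono fun t ht => by field_simp)
  -- measurable NNReal density
  have hd : AEMeasurable (fun t => Real.toNNReal (k t)) ν' :=
    measurable_real_toNNReal.comp_aemeasurable hkm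
  set D : ℝ → ℝ≥0 := hd.mk _ with hDdef
  have hDmeas : Measurable D := hd.measurable_mk
  have hDae : (fun t => Real.toNNReal (k t)) =ᵐ[ν'] D := hd.ae_eq_mk
  set ν : Measure ℝ := ν'.withDensity (fun t => (D t : ℝ≥0∞)) with hνdef
  have hDk : (fun t => (D t : ℝ)) =ᵐ[ν'] k := by
    filter_upwards [hDae, hkpos] with t h1 h2
    simp [← h1, Real.coe_toNNReal _ h2.le]
  have hDne : ∀ᵐ t ∂ν', (D t : ℝ≥0∞) ≠ 0 := by
    filter_upwards [hDk, hkpos] with t h1 h2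
    simp only [ne_eq, ENNReal.coe_eq_zero]
    intro h; rw [h] at h1; simp at h1; linarith
  have νac : ν ≪ ν' := withDensity_absolutelyContinuous _ _
  have haeν : ∀ {p : ℝ → Prop}, (∀ᵐ t ∂ν', p t) → (∀ᵐ t ∂ν, p t) := fun h => νac.ae_le h
  have haeν' : ∀ {p : ℝ → Prop}, (∀ᵐ t ∂ν, p t) → (∀ᵐ t ∂ν', p t) := by
    intro p h
    have h2 := (ae_withDensity_iff hDmeas.coe_nnreal_ennreal).1 h
    filter_upwards [h2, hDne] with t h3 h4
    exact h3 h4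
  -- transfer of integrability and integrals
  have hIntIff : ∀ g : ℝ → ℝ, Integrable g ν ↔ Integrable (fun t => g t * k t) ν' := by
    intro g
    rw [hνdef, integrable_withDensity_iff_integrable_smul hDmeas]
    exact integrable_congr (hDk.mono fun t ht => by
      simp [NNReal.smul_def, ht, mul_comm])
  have hIntEq : ∀ g : ℝ → ℝ, ∫ t, g t ∂ν = ∫ t, g t * k t ∂ν' := by
    intro g
    rw [hνdef, integral_withDensity_eq_integral_smul hDmeas]
    exact integral_congr_ae (hDk.mono fun t ht => by
      simp [NNReal.smul_def, ht, mul_comm])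
  -- measurability of the derivative functions
  have hf'm : AEStronglyMeasurable f' ν' := by
    have h1 : ∀ᵐ t ∂ν', deriv f t = f' t := hmem.mono fun t ht => (hder t ht).deriv
    exact (measurable_deriv f).aestronglyMeasurable.congr h1
  have hψdm : ∀ j, AEStronglyMeasurable (ψd j) ν' := by
    intro j
    have h1 : ∀ᵐ t ∂ν', deriv (ψ j) t = ψd j t := hmem.mono fun t ht => (hprim j t ht).deriv
    exact (measurable_deriv (ψ j)).aestronglyMeasurable.congr h1
  -- membership in L²(ν)
  have hmemℒp : ∀ g : ℝ → ℝ, AEStronglyMeasurable g ν' →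
      IntegrableOn (fun t => w t * g t ^ 2 * ρ t) (Ioo a b) → MemLp g 2 ν := by
    intro g hgm hgint
    rw [memLp_two_iff_integrable_sq (hgm.mono_ac νac), hIntIff]
    exact hgint.congr (Filter.Eventually.of_forall fun t => by simp [hkdef]; ring)
  have hmF : MemLp f' 2 ν := hmemℒp f' hf'm hfint
  have hmG : ∀ j, MemLp (ψd j) 2 ν := fun j => hmemℒp (ψd j) (hψdm j) (hmemd j)
  -- the test function u = indicator of uIoc x₀ x times 1/k
  have hI_sub : Set.uIoc x₀ x ⊆ Set.Ioo a b := by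
    intro t ht
    rw [Set.mem_uIoc] at ht
    constructor
    · rcases ht with h | h
      · exact lt_trans hx₀.1 h.1
      · exact lt_trans hx.1 h.1
    · rcases ht with h | h
      · exact lt_of_le_of_lt h.2 hx.2
      · exact lt_of_le_of_lt h.2 hx₀.2
  set u : ℝ → ℝ := (Set.uIoc x₀ x).indicator (fun t => (k t)⁻¹) with hudef
  have hum : AEStronglyMeasurable u ν' :=
    ((hkm.inv).indicator measurableSet_uIoc).aestronglyMeasurable
  have hrestr : ν'.restrict (Set.uIoc x₀ x) = volume.restrict (Set.uIoc x₀ x) := by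
    rw [hν'def, Measure.restrict_restrict measurableSet_uIoc,
      Set.inter_eq_self_of_subset_left hI_sub]
  have hindint : Integrable ((Set.uIoc x₀ x).indicator fun t => 1 / k t) ν' := by
    rw [integrable_indicator_iff measurableSet_uIoc]
    unfold ν'
    rw [IntegrableOn, hrestr]
    exact hinv.mono_set hI_sub
  have hmu : MemLp u 2 ν := by
    rw [memLp_two_iff_integrable_sq (hum.mono_ac νac), hIntIff]
    refine hindint.congr ?_
    filter_upwards [hkpos] with t ht
    by_cases hmem : t ∈ Set.uIoc x₀ x
    · simp only [hudef, Set.indicator_of_mem hmem]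
      field_simp
    · simp [hudef, Set.indicator_of_notMem hmem]
  -- L² elements
  set F : Lp ℝ 2 ν := hmF.toLp f' with hFdef
  set G : ℕ → Lp ℝ 2 ν := fun j => (hmG j).toLp (ψd j) with hGdef
  set U : Lp ℝ 2 ν := hmu.toLp u with hUdef
  -- inner products as integrals
  have hinner : ∀ (X Y : Lp ℝ 2 ν) (g h : ℝ → ℝ), ⇑X =ᵐ[ν] g → ⇑Y =ᵐ[ν] h →
      ⟪X, Y⟫ = ∫ t, g t * h t * k t ∂ν' := by
    intro X Y g h hXg hYh
    rw [L2.inner_def, ← hIntEq (fun t => g t * h t)]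
    refine integral_congr_ae ?_
    filter_upwards [hXg, hYh] with t h1 h2
    simp [h1, h2, RCLike.inner_apply, mul_comm]
  -- sign
  set ε : ℝ := if x₀ ≤ x then 1 else -1 with hεdef
  have hε2 : ε * ε = 1 := by rw [hεdef]; split_ifs <;> norm_num
  have hIcc_sub : Set.uIcc x₀ x ⊆ Set.Ioo a b := by
    intro t ht
    rw [Set.mem_uIcc] at ht
    constructor
    · rcases ht with h | h
      · exact lt_of_lt_of_le hx₀.1 h.1
      · exact lt_of_lt_of_le hx.1 h.1
    · rcases ht with h | h
      · exact lt_of_le_of_lt h.2 hx.2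
      · exact lt_of_le_of_lt h.2 hx₀.2
  -- fundamental theorem of calculus for members of H¹
  have hFTC : ∀ (g g' : ℝ → ℝ), (∀ t ∈ Set.Ioo a b, HasDerivAt g (g' t) t) →
      IntegrableOn (fun t => w t * g' t ^ 2 * ρ t) (Ioo a b) →
      AEStronglyMeasurable g' ν' →
      ∫ t in Set.uIoc x₀ x, g' t = ε * (g x - g x₀) := by
    intro g g' hg hgint hgm
    have hbint : IntegrableOn
        (fun t => (w t * g' t ^ 2 * ρ t + 1 / (w t * ρ t)) / 2) (Set.uIoc x₀ x) :=
      ((hgint.mono_set hI_sub).add (hinv.mono_set hI_sub)).div_const 2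
    have hgm' : AEStronglyMeasurable g' (volume.restrict (Set.uIoc x₀ x)) := by
      rw [← hrestr]; exact hgm.mono_measure Measure.restrict_le_self
    have hint : IntegrableOn g' (Set.uIoc x₀ x) := by
      refine hbint.mono' hgm' ?_
      filter_upwards [ae_restrict_mem measurableSet_uIoc] with t ht
      have htI : t ∈ Ioo a b := hI_sub ht
      have hk : 0 < w t * ρ t := mul_pos (hwpos t htI) (hρpos t htI)
      have hk1 : (w t * ρ t) * (1 / (w t * ρ t)) = 1 := by rw [mul_one_div, div_self hk.ne']
      rw [Real.norm_eq_abs]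
      nlinarith [sq_nonneg ((w t * ρ t) * |g' t| - 1), sq_abs (g' t), abs_nonneg (g' t),
        mul_pos hk hk]
    have hii : IntervalIntegrable g' volume x₀ x := intervalIntegrable_iff.2 hint
    have hftc := intervalIntegral.integral_eq_sub_of_hasDerivAt
      (fun t ht => hg t (hIcc_sub ht)) hii
    by_cases hle : x₀ ≤ x
    · rw [Set.uIoc_of_le hle, ← intervalIntegral.integral_of_le hle, hftc, hεdef,
        if_pos hle]
      ring
    · push_neg at hle
      have h1 : Set.uIoc x₀ x = Set.Ioc x x₀ := Set.uIoc_comm x₀ x ▸ Set.uIoc_of_le hle.le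
      rw [h1, ← intervalIntegral.integral_of_le hle.le, hεdef, if_neg (not_le.2 hle)]
      rw [intervalIntegral.integral_symm, hftc]
      ring
  -- values of the inner products
  have hUval : ∀ (g g' : ℝ → ℝ) (hg' : MemLp g' 2 ν),
      (∀ t ∈ Set.Ioo a b, HasDerivAt g (g' t) t) →
      IntegrableOn (fun t => w t * g' t ^ 2 * ρ t) (Ioo a b) →
      AEStronglyMeasurable g' ν' →
      ⟪U, hg'.toLp g'⟫ = ε * (g x - g x₀) := by
    intro g g' hg' hgd hgint hgm
    rw [hinner U _ u g' hmu.coeFn_toLp hg'.coeFn_toLp]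
    have h1 : (fun t => u t * g' t * k t) =ᵐ[ν'] (Set.uIoc x₀ x).indicator g' := by
      filter_upwards [hkpos] with t ht
      by_cases hm : t ∈ Set.uIoc x₀ x
      · simp only [hudef, Set.indicator_of_mem hm]
        field_simp
      · simp [hudef, Set.indicator_of_notMem hm]
    rw [integral_congr_ae h1, integral_indicator measurableSet_uIoc, hrestr]
    exact hFTC g g' hgd hgint hgm
  have hUF : ⟪U, F⟫ = ε * (f x - f x₀) := hUval f f' hmF hder hfint hf'm
  have hUG : ∀ j, ⟪U, G j⟫ = ε * (ψ j x - ψ j x₀) := fun j =>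
    hUval (ψ j) (ψd j) (hmG j) (hprim j) (hmemd j) (hψdm j)
  have hGF : ∀ j, ⟪G j, F⟫ = ∫ t in Ioo a b, w t * f' t * ψd j t * ρ t := by
    intro j
    rw [hinner (G j) F (ψd j) f' (hmG j).coeFn_toLp hmF.coeFn_toLp]
    exact integral_congr_ae (Filter.Eventually.of_forall fun t => by
      simp only [hkdef]; ring)
  have hGG : ∀ j m, ⟪G j, G m⟫ = ∫ t in Ioo a b, w t * ψd j t * ψd m t * ρ t := by
    intro j m
    rw [hinner (G j) (G m) (ψd j) (ψd m) (hmG j).coeFn_toLp (hmG m).coeFn_toLp]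
    exact integral_congr_ae (Filter.Eventually.of_forall fun t => by
      simp only [hkdef]; ring)
  have hGnorm : ∀ j, ‖G j‖ ^ 2 = ∫ t in Ioo a b, w t * ψd j t ^ 2 * ρ t := by
    intro j
    rw [← real_inner_self_eq_norm_sq, hGG j j]
    exact integral_congr_ae (Filter.Eventually.of_forall fun t => by ring)
  have hGpos : ∀ j : ℕ, j ≠ 0 → 0 < ‖G j‖ := by
    intro j hj
    have h1 := hdpos j (Nat.one_le_iff_ne_zero.2 hj)
    rw [← hGnorm j] at h1
    have h2 : ‖G j‖ ≠ 0 := by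
      intro h
      rw [h] at h1
      norm_num at h1
    exact lt_of_le_of_ne (norm_nonneg _) (Ne.symm h2)
  -- the orthonormal family
  set v : {j : ℕ // j ≠ 0} → Lp ℝ 2 ν := fun j => ‖G j.1‖⁻¹ • G j.1 with hvdef
  have hv : Orthonormal ℝ v := by
    rw [orthonormal_iff_ite]
    intro i j
    by_cases hij : i = j
    · subst hij
      rw [if_pos rfl]
      simp only [hvdef]
      rw [real_inner_smul_left, real_inner_smul_right, real_inner_self_eq_norm_sq]
      have h := (hGpos i.1 i.2).ne'
      field_simp
    · rw [if_neg hij]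
      have hne : i.1 ≠ j.1 := fun h => hij (Subtype.ext h)
      simp only [hvdef, real_inner_smul_left, real_inner_smul_right]
      rw [hGG i.1 j.1, hdorth i.1 j.1 (Nat.one_le_iff_ne_zero.2 i.2)
        (Nat.one_le_iff_ne_zero.2 j.2) hne]
      ring
  -- completeness: orthogonal complement of the span is trivial
  have hbot : (Submodule.span ℝ (Set.range v))ᗮ = ⊥ := by
    rw [Submodule.eq_bot_iff]
    intro X hX
    have hXo : ∀ (j : ℕ), j ≠ 0 → ⟪G j, X⟫ = 0 := by
      intro j hj
      have h1 : ⟪v ⟨j, hj⟩, X⟫ = 0 :=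
        (Submodule.mem_orthogonal _ _).1 hX _ (Submodule.subset_span (Set.mem_range_self _))
      rw [hvdef] at h1
      simp only [real_inner_smul_left] at h1
      rcases mul_eq_zero.1 h1 with h | h
      · exact absurd h (inv_ne_zero (hGpos j hj).ne')
      · exact h
    -- measurable representative of X
    have hXm : AEStronglyMeasurable (⇑X) ν := Lp.aestronglyMeasurable X
    set m : ℝ → ℝ := hXm.mk _ with hmdef
    have hm_meas : Measurable m := hXm.stronglyMeasurable_mk.measurable
    have hXm' : ⇑X =ᵐ[ν'] m := haeν' hXm.ae_eq_mk
    have hmint : IntegrableOn (fun t => w t * m t ^ 2 * ρ t) (Ioo a b) := by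
      have h1 : Integrable (fun t => (X t) ^ 2) ν :=
        (memLp_two_iff_integrable_sq (Lp.memLp X).aestronglyMeasurable).1 (Lp.memLp X)
      have h2 : Integrable (fun t => (X t) ^ 2 * k t) ν' := (hIntIff _).1 h1
      refine h2.congr ?_
      filter_upwards [hXm'] with t ht
      rw [← ht]
      simp only [hkdef]
      ring
    have horth' : ∀ j, 1 ≤ j → ∫ t in Ioo a b, m t * ψd j t * w t * ρ t = 0 := by
      intro j hj
      have h1 : ⟪G j, X⟫ = 0 := hXo j (by omega)
      rw [hinner (G j) X (ψd j) m (hmG j).coeFn_toLp hXm.ae_eq_mk] at h1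
      rw [← h1]
      exact integral_congr_ae (Filter.Eventually.of_forall fun t => by
        simp only [hkdef]; ring)
    have hzero := hcompleteW m hm_meas hmint horth'
    have hX0 : ⇑X =ᵐ[ν] 0 := by
      filter_upwards [hXm.ae_eq_mk, haeν hzero] with t h1 h2
      simp only [Pi.zero_apply]
      exact h1.trans h2
    exact Lp.eq_zero_iff_ae_eq_zero.2 hX0
  -- Hilbert basis and the expansion
  set B : HilbertBasis {j : ℕ // j ≠ 0} ℝ (Lp ℝ 2 ν) :=
    HilbertBasis.mkOfOrthogonalEqBot hv hbot with hBdef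
  have hB : ⇑B = v := HilbertBasis.coe_mkOfOrthogonalEqBot hv hbot
  have h1 : HasSum (fun i : {j : ℕ // j ≠ 0} => B.repr F i • B i) F := B.hasSum_repr F
  have h2 := (innerSL ℝ U).hasSum h1
  set c : ℕ → ℝ := fun j => (∫ t in Ioo a b, w t * f' t * ψd j t * ρ t) /
      (∫ t in Ioo a b, w t * ψd j t ^ 2 * ρ t) with hcdef
  have hterm : ∀ i : {j : ℕ // j ≠ 0},
      (innerSL ℝ U) (B.repr F i • B i) = ε * (c i.1 * (ψ i.1 x - ψ i.1 x₀)) := by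
    intro i
    have hBi : B i = v i := by rw [hB]
    rw [innerSL_apply_apply, real_inner_smul_right, B.repr_apply_apply, hBi]
    simp only [hvdef]
    rw [real_inner_smul_left, real_inner_smul_right, hGF i.1, hUG i.1]
    have hn := hGnorm i.1
    have hp := hGpos i.1 i.2
    simp only [hcdef]
    rw [← hn]
    field_simp
  have h3 : HasSum (fun i : {j : ℕ // j ≠ 0} => ε * (c i.1 * (ψ i.1 x - ψ i.1 x₀)))
      (ε * (f x - f x₀)) := by
    have h4 := h2
    rw [show ((innerSL ℝ U) F) = ε * (f x - f x₀) from by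
      rw [innerSL_apply_apply]; exact hUF] at h4
    simp only [hterm] at h4
    exact h4
  have h6 : HasSum (fun i : {j : ℕ // j ≠ 0} => c i.1 * (ψ i.1 x - ψ i.1 x₀))
      (f x - f x₀) := by
    have h5 := h3.mul_left ε
    have e1 : ∀ z : ℝ, ε * (ε * z) = z := fun z => by rw [← mul_assoc, hε2, one_mul]
    simp only [e1] at h5
    exact h5
  have h7 : HasSum (((fun j : ℕ => c j * (ψ j x - ψ j x₀)) ∘ (Subtype.val)) :
      {j : ℕ | j ≠ 0} → ℝ) (f x - f x₀) := h6
  rw [hasSum_subtype_iff_indicator] at h7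
  convert h7 using 1
  funext j
  by_cases hj : j = 0
  · simp [hj]
  · rw [if_neg hj, Set.indicator_of_mem (show j ∈ {j : ℕ | j ≠ 0} from hj)]
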